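/- arXiv:1910.10613 — 3 statements merged into one kernel-verified Lean document; each statement's English description precedes it below -/
import Mathlib

section
/- For λ > 0, the 4×4 matrix M_λ with rows (−1, 0, 1/λ, 1/λ), (0, 0, 1/λ, 1/λ), (2, −1, 1, 0), (−1, 1, 0, 0) has eigenvalues −1, 1, −1/√λ, 1/√λ. -/
open Real

/-- For `λ > 0`, the matrix `M_λ` of the regularized Pontryagin system has
eigenvalues `−1, 1, −1/√λ, 1/√λ`. -/
theorem stmt_15 (l : ℝ) (hl : 0 < l) :
    let M : Matrix (Fin 4) (Fin 4) ℝ :=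
      Matrix.of !![-1, 0, 1 / l, 1 / l;
                    0, 0, 1 / l, 1 / l;
                    2, -1, 1, 0;
                   -1, 1, 0, 0]
    ∀ μ ∈ ({-1, 1, -(1 / Real.sqrt l), 1 / Real.sqrt l} : Set ℝ),
      ∃ v : Fin 4 → ℝ, v ≠ 0 ∧ M.mulVec v = μ • v := by
  intro M μ hμ
  have hM : ∀ i j, M i j = !![-1, 0, 1 / l, 1 / l; 0, 0, 1 / l, 1 / l; 2, -1, 1, 0; -1, 1, 0, 0] i j := fun _ _ => rfl
  have hl0 : l ≠ 0 := ne_of_gt hl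
  have hs : Real.sqrt l ≠ 0 := by positivity
  have hsq : Real.sqrt l * Real.sqrt l = l := Real.mul_self_sqrt hl.le
  rcases hμ with h | h | h | h
  · -- μ = -1
    refine ⟨![1, 0, -1, 1], ?_, ?_⟩
    · intro hv
      have := congrFun hv 0
      simp at this
    · subst h
      funext i
      fin_cases i <;>
        simp [hM, Matrix.mulVec, dotProduct, Fin.sum_univ_four] <;> ring
  · -- μ = 1
    refine ⟨![1, 2, 2 * l - 1, 1], ?_, ?_⟩
    · intro hv
      have := congrFun hv 0
      simp at this
    · subst h
      funext i
      fin_cases i <;>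
        simp [hM, Matrix.mulVec, dotProduct, Fin.sum_univ_four] <;>
        (try field_simp) <;> (try ring_nf) <;> simp [mul_inv_cancel₀ hl0] <;> norm_num
  all_goals {
    -- μ = ± 1/√l, with μ^2 = 1/l
    have hmu2 : μ * μ = 1 / l := by
      subst h
      field_simp <;> linarith [Real.sq_sqrt hl.le]
    refine ⟨![μ * μ, μ * μ + μ, μ, 1], ?_, ?_⟩
    · intro hv
      have := congrFun hv 3
      simp at this
    · have hinv : l⁻¹ = μ * μ := by rw [hmu2, one_div]
      funext i
      fin_cases i <;>
        simp [hM, Matrix.mulVec, dotProduct, Fin.sum_univ_four] <;>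
        (try simp only [hinv]) <;> ring
    }
end

section
/- For λ > 0, λ ≠ 1, the vectors (1,0,−1,1), (1,2,2λ−1,1), (1,1−√λ,−√λ,λ), (1,1+√λ,√λ,λ) are eigenvectors of M_λ with eigenvalues −1, 1, −1/√λ, 1/√λ respectively, and they form a basis of ℝ⁴. -/
open Real

theorem matrix_of_of_apply {m n α : Type*} (A : Matrix m n α) (i : m) (j : n) : Matrix.of A i j = A i j := rfl

/-- For `λ > 0`, `λ ≠ 1`, the vectors `(1,0,−1,1)`, `(1,2,2λ−1,1)`,
`(1,1−√λ,−√λ,λ)`, `(1,1+√λ,√λ,λ)` are eigenvectors of `M_λ` with eigenvalues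
`−1, 1, −1/√λ, 1/√λ`, and they form a basis of `ℝ⁴`. -/
theorem stmt_16 (l : ℝ) (hl : 0 < l) (hl1 : l ≠ 1) :
    let M : Matrix (Fin 4) (Fin 4) ℝ :=
      Matrix.of !![-1, 0, 1 / l, 1 / l;
                    0, 0, 1 / l, 1 / l;
                    2, -1, 1, 0;
                   -1, 1, 0, 0]
    let v₁ : Fin 4 → ℝ := ![1, 0, -1, 1]
    let v₂ : Fin 4 → ℝ := ![1, 2, 2 * l - 1, 1]
    let v₃ : Fin 4 → ℝ := ![1, 1 - Real.sqrt l, -Real.sqrt l, l]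
    let v₄ : Fin 4 → ℝ := ![1, 1 + Real.sqrt l, Real.sqrt l, l]
    M.mulVec v₁ = (-1 : ℝ) • v₁ ∧
    M.mulVec v₂ = (1 : ℝ) • v₂ ∧
    M.mulVec v₃ = (-(1 / Real.sqrt l)) • v₃ ∧
    M.mulVec v₄ = (1 / Real.sqrt l) • v₄ ∧
    LinearIndependent ℝ ![v₁, v₂, v₃, v₄] ∧
    Submodule.span ℝ {v₁, v₂, v₃, v₄} = ⊤ := by
  intro M v₁ v₂ v₃ v₄
  have hl0 : l ≠ 0 := ne_of_gt hl
  have hs : Real.sqrt l > 0 := Real.sqrt_pos.mpr hl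
  have hs0 : Real.sqrt l ≠ 0 := ne_of_gt hs
  have hsq : Real.sqrt l * Real.sqrt l = l := Real.mul_self_sqrt hl.le
  have hs1 : Real.sqrt l ≠ 1 := by
    intro h
    apply hl1
    rw [← hsq, h, mul_one]
  have h1 : M.mulVec v₁ = (-1 : ℝ) • v₁ := by
    funext i
    fin_cases i <;>
      simp [M, v₁, Matrix.mulVec, dotProduct, matrix_of_of_apply, Fin.sum_univ_four] <;> ring
  have h2 : M.mulVec v₂ = (1 : ℝ) • v₂ := by
    funext i
    fin_cases i <;>
      simp [M, v₂, Matrix.mulVec, dotProduct, matrix_of_of_apply, Fin.sum_univ_four] <;>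
      (try field_simp) <;> (try ring)
  have h3 : M.mulVec v₃ = (-(1 / Real.sqrt l)) • v₃ := by
    funext i
    fin_cases i <;>
      simp [M, v₃, Matrix.mulVec, dotProduct, matrix_of_of_apply, Fin.sum_univ_four] <;>
      (try field_simp) <;> (try nlinarith [hsq])
  have h4 : M.mulVec v₄ = (1 / Real.sqrt l) • v₄ := by
    funext i
    fin_cases i <;>
      simp [M, v₄, Matrix.mulVec, dotProduct, matrix_of_of_apply, Fin.sum_univ_four] <;>
      (try field_simp) <;> (try nlinarith [hsq])
  -- linear independence via determinant
  set s := Real.sqrt l with hsdef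
  have hA : LinearIndependent ℝ ![v₁, v₂, v₃, v₄] := by
    let A : Matrix (Fin 4) (Fin 4) ℝ :=
      Matrix.of !![1, 0, -1, 1; 1, 2, 2 * l - 1, 1; 1, 1 - s, -s, l; 1, 1 + s, s, l]
    have hrows : (fun i => A i) = ![v₁, v₂, v₃, v₄] := by
      funext i
      fin_cases i <;> rfl
    have hdet : A.det ≠ 0 := by
      have hd : A.det = 4 * s * (1 - s * s) ^ 2 := by
        have e1 : Fin.succAbove (2 : Fin 4) (2 : Fin 3) = 3 := rfl
        have e2 : Fin.castSucc (2 : Fin 3) = (2 : Fin 4) := rfl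
        simp [A, matrix_of_of_apply, Matrix.det_succ_row_zero, Fin.sum_univ_succ, Matrix.det_fin_three, ← hsq, e1, e2, show Fin.succAbove (3 : Fin 4) (2 : Fin 3) = 2 from rfl]
        ring
      rw [hd]
      have h1l : (1 - s * s) ≠ 0 := by rw [hsq]; intro h; apply hl1; linarith
      positivity
    have : LinearIndependent ℝ (fun i => A i) :=
      Matrix.linearIndependent_rows_iff_isUnit.mpr
        ((Matrix.isUnit_iff_isUnit_det A).mpr (isUnit_iff_ne_zero.mpr hdet))
    rwa [hrows] at this
  refine ⟨h1, h2, h3, h4, hA, ?_⟩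
  have hrange : ({v₁, v₂, v₃, v₄} : Set (Fin 4 → ℝ)) = Set.range ![v₁, v₂, v₃, v₄] := by
    ext x
    simp [Matrix.range_cons, Matrix.range_empty, Set.mem_insert_iff]
    tauto
  rw [hrange]
  exact hA.span_eq_top_of_card_eq_finrank (by simp)
end

section
/- Under the singular conditions for the n-th order problem—namely p_n + p_{n−1} = 0 on a nontrivial interval with adjoint dynamics ṗ_k = −p_{k−1} + (−1)^{k+1}(2x₁ − z₀) for 1 ≤ k ≤ n−1, ṗ_n = p_n + (−1)^{n+1}(2x₁ − z₀), ṗ₀ = z₀ − x₁, and state dynamics ż_k = z_{k+1}, ż_{n−1} = v, ẋ_n = v − x_n—the singular control satisfies z₀ = z₁ = ⋯ = z_{n−1} = v, and the singular trajectories are x_n(t) = Y e^{−t} + Z sinh(t), z₀(t) = ⋯ = z_{n−1}(t) = v(t) = Z eᵗ for constants Y, Z. -/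
open Real Finset


lemma my_deriv_eq_on {a b : ℝ} {f g f' g' : ℝ → ℝ}
    (hf : ∀ t ∈ Set.Ioo a b, HasDerivAt f (f' t) t)
    (hg : ∀ t ∈ Set.Ioo a b, HasDerivAt g (g' t) t)
    (heq : ∀ t ∈ Set.Ioo a b, f t = g t) :
    ∀ t ∈ Set.Ioo a b, f' t = g' t := by
  intro t ht
  have hev : f =ᶠ[nhds t] g :=
    Filter.eventuallyEq_of_mem (isOpen_Ioo.mem_nhds ht) (fun s hs => heq s hs)
  exact (hf t ht).unique ((hg t ht).congr_of_eventuallyEq hev)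

lemma my_deriv_zero {a b : ℝ} {f f' : ℝ → ℝ}
    (hf : ∀ t ∈ Set.Ioo a b, HasDerivAt f (f' t) t)
    (h0 : ∀ t ∈ Set.Ioo a b, f t = 0) :
    ∀ t ∈ Set.Ioo a b, f' t = 0 :=
  my_deriv_eq_on hf (fun t _ => hasDerivAt_const t 0) h0

lemma my_const_on {a b : ℝ} {f : ℝ → ℝ}
    (hf : ∀ t ∈ Set.Ioo a b, HasDerivAt f 0 t) :
    ∀ s ∈ Set.Ioo a b, ∀ t ∈ Set.Ioo a b, f t = f s := by
  have main : ∀ s ∈ Set.Ioo a b, ∀ t ∈ Set.Ioo a b, s < t → f t = f s := by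
    intro s hs t ht hst
    have hsub : Set.Icc s t ⊆ Set.Ioo a b := fun x hx =>
      ⟨lt_of_lt_of_le hs.1 hx.1, lt_of_le_of_lt hx.2 ht.2⟩
    have hcont : ContinuousOn f (Set.Icc s t) := fun x hx =>
      ((hf x (hsub hx)).continuousAt).continuousWithinAt
    have hderiv : ∀ x ∈ Set.Ioo s t, HasDerivAt f ((fun _ => (0:ℝ)) x) x := fun x hx =>
      hf x (hsub ⟨le_of_lt hx.1, le_of_lt hx.2⟩)
    obtain ⟨c, hc, hc0⟩ := exists_hasDerivAt_eq_slope f (fun _ => (0:ℝ)) hst hcont hderiv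
    have hne : t - s ≠ 0 := by linarith
    have := hc0.symm
    rw [div_eq_iff hne] at this
    linarith
  intro s hs t ht
  rcases lt_trichotomy s t with h|h|h
  · exact main s hs t ht h
  · rw [h]
  · exact (main t ht s hs h).symm

lemma my_alt_sum (f : ℕ → ℝ) : ∀ n, 2 ≤ n →
    (∑ k ∈ Finset.Icc 1 (n-2), (-1:ℝ)^(k+1) * f (k+1))
      + ∑ k ∈ Finset.Icc 1 (n-1), (-1:ℝ)^(k+1) * f k = f 1 := by
  intro n hn
  induction n, hn using Nat.le_induction with
  | base => norm_num
  | succ m hm ih =>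
    rw [show m+1-2 = (m-2)+1 from by omega, Finset.sum_Icc_succ_top (by omega : 1 ≤ (m-2)+1),
      show m+1-1 = (m-1)+1 from by omega, Finset.sum_Icc_succ_top (by omega : 1 ≤ (m-1)+1),
      show (m-2)+1+1 = m from by omega, show (m-1)+1 = m from by omega]
    have : ((-1:ℝ))^(m+1) = -(-1:ℝ)^m := by rw [pow_succ]; ring
    rw [this]
    linarith [ih]


/-- Singular extremals of the `n`-th order problem: if `p_n + p_{n−1} = 0` on a
nontrivial interval, with the stated adjoint and state dynamics (where
`x₁ = z₁ − z₂ + ⋯ + (−1)ⁿ z_{n−1} − (−1)ⁿ x_n`), then the singular control satisfies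
`z₀ = z₁ = ⋯ = z_{n−1} = v = Z eᵗ` and `x_n(t) = Y e^{−t} + Z sinh t`. -/
theorem stmt_19 (n : ℕ) (hn : 1 ≤ n) (t₀ t₁ : ℝ) (ht : t₀ < t₁)
    (xn v : ℝ → ℝ) (z p : ℕ → ℝ → ℝ) (x₁ : ℝ → ℝ)
    (hx₁ : ∀ t, x₁ t =
      (∑ k ∈ Finset.Icc 1 (n - 1), (-1 : ℝ) ^ (k + 1) * z k t) - (-1 : ℝ) ^ n * xn t)
    (hxn : ∀ t ∈ Set.Ioo t₀ t₁, HasDerivAt xn (v t - xn t) t)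
    (hztop : ∀ t ∈ Set.Ioo t₀ t₁, HasDerivAt (z (n - 1)) (v t) t)
    (hz : ∀ k, k < n - 1 → ∀ t ∈ Set.Ioo t₀ t₁, HasDerivAt (z k) (z (k + 1) t) t)
    (hpn : ∀ t ∈ Set.Ioo t₀ t₁,
      HasDerivAt (p n) (p n t + (-1 : ℝ) ^ (n + 1) * (2 * x₁ t - z 0 t)) t)
    (hpk : ∀ k, 1 ≤ k → k ≤ n - 1 → ∀ t ∈ Set.Ioo t₀ t₁,
      HasDerivAt (p k) (-p (k - 1) t + (-1 : ℝ) ^ (k + 1) * (2 * x₁ t - z 0 t)) t)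
    (hp0 : ∀ t ∈ Set.Ioo t₀ t₁, HasDerivAt (p 0) (z 0 t - x₁ t) t)
    (hsing : ∀ t ∈ Set.Ioo t₀ t₁, p n t + p (n - 1) t = 0) :
    ∃ Y Z : ℝ, ∀ t ∈ Set.Ioo t₀ t₁,
      (∀ k < n, z k t = Z * Real.exp t) ∧
      v t = Z * Real.exp t ∧
      xn t = Y * Real.exp (-t) + Z * Real.sinh t := by
  -- Step 1: descent `p k + p (k-1) = 0` for all `1 ≤ k ≤ n`
  have key : ∀ j, j ≤ n - 1 → ∀ t ∈ Set.Ioo t₀ t₁, p (n - j) t + p (n - j - 1) t = 0 := by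
    intro j
    induction j with
    | zero => intro _ t htI; simpa using hsing t htI
    | succ j ih =>
      intro hj
      have hprev := ih (by omega)
      set k := n - j with hk
      have hk2 : 2 ≤ k := by omega
      have hkn : k ≤ n := by omega
      rcases eq_or_lt_of_le hkn with hkeq | hklt
      · -- k = n : use hpn and hpk (n-1)
        have hn2 : 2 ≤ n := by omega
        have hd1 := fun t htI => (hpn t htI).add
          ((hpk (n-1) (by omega) (by omega) t htI))
        have hzero := my_deriv_zero hd1 (by
          intro t htI; exact hsing t htI)
        intro t htI
        have h1 := hzero t htI
        have h2 := hsing t htI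
        rw [show (n-1) + 1 = n from by omega, show n - 1 - 1 = n - 2 from by omega] at h1
        rw [show ((-1:ℝ))^(n+1) = -(-1:ℝ)^n from by rw [pow_succ]; ring] at h1
        rw [show n - (j+1) = k - 1 from by omega,
          show k - 1 = n - 1 from by omega, show n - 1 - 1 = n - 2 from by omega]
        nlinarith [h1, h2]
      · -- k < n : use hpk k and hpk (k-1)
        have hd1 := fun t htI => ((hpk k (by omega) (by omega) t htI)).add
          ((hpk (k-1) (by omega) (by omega) t htI))
        have hzero := my_deriv_zero hd1 hprev
        intro t htI
        have h1 := hzero t htI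
        rw [show (k-1) + 1 = k from by omega, show k - 1 - 1 = k - 2 from by omega] at h1
        rw [show ((-1:ℝ))^(k+1) = -(-1:ℝ)^k from by rw [pow_succ]; ring] at h1
        rw [show n - (j+1) = k - 1 from by omega, show k - 1 - 1 = k - 2 from by omega]
        nlinarith [h1]
  have h10 : ∀ t ∈ Set.Ioo t₀ t₁, p 1 t + p 0 t = 0 := by
    intro t htI
    have := key (n-1) le_rfl t htI
    rw [show n - (n-1) = 1 from by omega] at this
    simpa using this
  -- Step 2: p 0 = x₁ on the interval
  have h0x : ∀ t ∈ Set.Ioo t₀ t₁, p 0 t = x₁ t := by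
    rcases eq_or_lt_of_le hn with h1 | hn2
    · -- n = 1
      have h1' : n = 1 := h1.symm
      subst h1'
      have hd := fun t htI => (hpn t htI).add (hp0 t htI)
      have hzero := my_deriv_zero hd h10
      intro t htI
      have := hzero t htI
      have h2 := h10 t htI
      norm_num at this
      linarith
    · -- n ≥ 2
      have hd := fun t htI => ((hpk 1 le_rfl (by omega) t htI)).add (hp0 t htI)
      have hzero := my_deriv_zero hd h10
      intro t htI
      have := hzero t htI
      norm_num at this
      linarith
  -- Derivative of x₁ (for n ≥ 2)
  have hx₁d : 2 ≤ n → ∀ t ∈ Set.Ioo t₀ t₁, HasDerivAt x₁ (z 1 t - x₁ t) t := by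
    intro hn2 t htI
    have hsum : HasDerivAt (fun s => ∑ k ∈ Finset.Icc 1 (n-1), (-1:ℝ)^(k+1) * z k s)
        (∑ k ∈ Finset.Icc 1 (n-1), (-1:ℝ)^(k+1) * (if k = n-1 then v t else z (k+1) t)) t := by
      apply HasDerivAt.fun_sum
      intro k hk
      obtain ⟨hk1, hk2⟩ := Finset.mem_Icc.mp hk
      by_cases hkk : k = n - 1
      · rw [if_pos hkk, hkk]
        exact (hztop t htI).const_mul _
      · rw [if_neg hkk]
        exact (hz k (by omega) t htI).const_mul _
    have hxnd := (hxn t htI).const_mul ((-1:ℝ)^n)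
    have hcomb := hsum.sub hxnd
    have hsum_split : (∑ k ∈ Finset.Icc 1 (n-1),
          (-1:ℝ)^(k+1) * (if k = n-1 then v t else z (k+1) t))
        = (∑ k ∈ Finset.Icc 1 (n-2), (-1:ℝ)^(k+1) * z (k+1) t) + (-1:ℝ)^n * v t := by
      rw [show n-1 = (n-2)+1 from by omega,
        Finset.sum_Icc_succ_top (by omega : 1 ≤ (n-2)+1)]
      have hrw : ∀ k ∈ Finset.Icc 1 (n-2),
          (-1:ℝ)^(k+1) * (if k = (n-2)+1 then v t else z (k+1) t)
            = (-1:ℝ)^(k+1) * z (k+1) t := by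
        intro k hk
        obtain ⟨_, hk2⟩ := Finset.mem_Icc.mp hk
        rw [if_neg (by omega)]
      rw [Finset.sum_congr rfl hrw, if_pos rfl, show (n-2)+1+1 = n from by omega]
    have halt := my_alt_sum (fun k => z k t) n hn2
    have hval : z 1 t - x₁ t
        = (∑ k ∈ Finset.Icc 1 (n-1),
            (-1:ℝ)^(k+1) * (if k = n-1 then v t else z (k+1) t))
          - (-1:ℝ)^n * (v t - xn t) := by
      rw [hsum_split, hx₁ t]
      linarith [halt]
    have hF : HasDerivAt (fun s => (∑ k ∈ Finset.Icc 1 (n-1), (-1:ℝ)^(k+1) * z k s)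
        - (-1:ℝ)^n * xn s) (z 1 t - x₁ t) t := by
      rw [hval]; exact hcomb
    exact hF.congr_of_eventuallyEq (Filter.Eventually.of_forall (fun s => hx₁ s))
  -- Step 3: base equalities
  have hbase : (1 < n → ∀ t ∈ Set.Ioo t₀ t₁, z 0 t = z 1 t)
      ∧ (n = 1 → ∀ t ∈ Set.Ioo t₀ t₁, z 0 t = v t) := by
    constructor
    · intro hn2
      exact fun t htI => by
        have := my_deriv_eq_on hp0 (hx₁d (by omega)) h0x t htI
        linarith
    · intro h1
      subst h1
      have hx1xn : ∀ t, x₁ t = xn t := by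
        intro t; rw [hx₁ t]; norm_num
      have hxd : ∀ t ∈ Set.Ioo t₀ t₁, HasDerivAt x₁ (v t - x₁ t) t := by
        intro t htI
        have hfe : x₁ = xn := funext hx1xn
        rw [hfe]
        exact hxn t htI
      intro t htI
      have := my_deriv_eq_on hp0 hxd h0x t htI
      linarith
  -- Step 4: chain of equalities z k = z (k+1), z (n-1) = v
  have chain : ∀ k, k + 1 < n → ∀ t ∈ Set.Ioo t₀ t₁, z k t = z (k+1) t := by
    intro k
    induction k with
    | zero => intro h; exact hbase.1 (by omega)
    | succ k ih =>
      intro hk1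
      have hprev := ih (by omega)
      exact my_deriv_eq_on (hz k (by omega)) (hz (k+1) (by omega)) hprev
  have htopeq : ∀ t ∈ Set.Ioo t₀ t₁, z (n-1) t = v t := by
    rcases eq_or_lt_of_le hn with h1 | hn2
    · have h1' : n = 1 := h1.symm
      intro t htI
      rw [show n - 1 = 0 from by omega]
      exact hbase.2 h1' t htI
    · have hprev := chain (n-2) (by omega)
      have hd1 : ∀ t ∈ Set.Ioo t₀ t₁, HasDerivAt (z (n-2)) (z (n-1) t) t := by
        intro t htI
        have := hz (n-2) (by omega) t htI
        rwa [show n-2+1 = n-1 from by omega] at this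
      have hd2 : ∀ t ∈ Set.Ioo t₀ t₁, HasDerivAt (z (n-2+1)) (v t) t := by
        rw [show n-2+1 = n-1 from by omega]
        exact hztop
      exact my_deriv_eq_on hd1 hd2 hprev
  have zeq : ∀ k, k < n → ∀ t ∈ Set.Ioo t₀ t₁, z k t = z 0 t := by
    intro k
    induction k with
    | zero => intro _ t htI; rfl
    | succ k ih =>
      intro hk t htI
      rw [← chain k (by omega) t htI]
      exact ih (by omega) t htI
  have hveq : ∀ t ∈ Set.Ioo t₀ t₁, v t = z 0 t := by
    intro t htI
    rw [← htopeq t htI]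
    exact zeq (n-1) (by omega) t htI
  -- Step 5: z 0 satisfies z₀' = z₀
  have hz0d : ∀ t ∈ Set.Ioo t₀ t₁, HasDerivAt (z 0) (z 0 t) t := by
    rcases eq_or_lt_of_le hn with h1 | hn2
    · intro t htI
      have := hztop t htI
      rw [show n - 1 = 0 from by omega] at this
      rwa [← hveq t htI]
    · intro t htI
      have := hz 0 (by omega) t htI
      rwa [← chain 0 (by omega) t htI] at this
  -- Step 6: solve the ODEs
  set tm := (t₀ + t₁)/2 with htm
  have htmI : tm ∈ Set.Ioo t₀ t₁ := ⟨by rw [htm]; linarith, by rw [htm]; linarith⟩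
  set Z := z 0 tm * Real.exp (-tm) with hZ
  have hgd : ∀ t ∈ Set.Ioo t₀ t₁, HasDerivAt (fun s => z 0 s * Real.exp (-s)) 0 t := by
    intro t htI
    have he : HasDerivAt (fun s : ℝ => Real.exp (-s)) (Real.exp (-t) * (-1)) t :=
      (hasDerivAt_neg t).exp
    have : HasDerivAt (fun s => z 0 s * Real.exp (-s)) (z 0 t * Real.exp (-t) + z 0 t * (Real.exp (-t) * (-1))) t := (hz0d t htI).mul he
    convert this using 1
    ring
  have hz0eq : ∀ t ∈ Set.Ioo t₀ t₁, z 0 t = Z * Real.exp t := by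
    intro t htI
    have := my_const_on hgd tm htmI t htI
    have hx : z 0 t * Real.exp (-t) = Z := this
    have hne : Real.exp (-t) ≠ 0 := Real.exp_ne_zero _
    calc z 0 t = z 0 t * Real.exp (-t) * Real.exp t := by
            rw [mul_assoc, ← Real.exp_add]; simp
      _ = Z * Real.exp t := by rw [hx]
  -- xn ODE
  have hxnd2 : ∀ t ∈ Set.Ioo t₀ t₁, HasDerivAt xn (Z * Real.exp t - xn t) t := by
    intro t htI
    have := hxn t htI
    rwa [hveq t htI, hz0eq t htI] at this
  set Y := (xn tm - Z * Real.sinh tm) * Real.exp tm with hY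
  have hhd : ∀ t ∈ Set.Ioo t₀ t₁,
      HasDerivAt (fun s => (xn s - Z * Real.sinh s) * Real.exp s) 0 t := by
    intro t htI
    have hs : HasDerivAt (fun s : ℝ => Z * Real.sinh s) (Z * Real.cosh t) t :=
      (Real.hasDerivAt_sinh t).const_mul Z
    have : HasDerivAt (fun s => (xn s - Z * Real.sinh s) * Real.exp s) ((Z * Real.exp t - xn t - Z * Real.cosh t) * Real.exp t + (xn t - Z * Real.sinh t) * Real.exp t) t := ((hxnd2 t htI).sub hs).mul (Real.hasDerivAt_exp t)
    convert this using 1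
    rw [← Real.cosh_add_sinh t]
    ring
  have hxneq : ∀ t ∈ Set.Ioo t₀ t₁, xn t = Y * Real.exp (-t) + Z * Real.sinh t := by
    intro t htI
    have := my_const_on hhd tm htmI t htI
    have hx : (xn t - Z * Real.sinh t) * Real.exp t = Y := this
    have hne : Real.exp t ≠ 0 := Real.exp_ne_zero _
    have : xn t - Z * Real.sinh t = Y * Real.exp (-t) := by
      rw [← hx, Real.exp_neg]
      field_simp
    linarith
  refine ⟨Y, Z, fun t htI => ⟨fun k hk => ?_, ?_, hxneq t htI⟩⟩
  · rw [zeq k hk t htI]; exact hz0eq t htI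
  · rw [hveq t htI]; exact hz0eq t htI
end
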